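/- Let u, u' ∈ Σ_q^{n−1} with supp(u−u') = {i_1, i_2}, where i_1 < i_2. Then for any v ∈ Σ_q^{n−1}: v ∈ B^S_2(u) ∩ B^S_2(u') if and only if exactly one of the following mutually exclusive conditions holds: (i) v_k = u_k for every k ∉ {i_1, i_2} (and v_{i_1}, v_{i_2} ∈ Σ_q are arbitrary); or (ii) v_k ≠ u_k for exactly one position k ∉ {i_1, i_2}, and (v_{i_1}, v_{i_2}) ∈ {(u_{i_1}, u'_{i_2}), (u'_{i_1}, u_{i_2})}. -/

import Mathlib

lemma dist_split {m q : ℕ} (v w : Fin m → Fin q) (i1 i2 : Fin m) (h : i1 ≠ i2) :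
    hammingDist v w = (Finset.univ.filter (fun k => k ≠ i1 ∧ k ≠ i2 ∧ v k ≠ w k)).card
      + (if v i1 = w i1 then 0 else 1) + (if v i2 = w i2 then 0 else 1) := by
  classical
  have hsplit : Finset.univ.filter (fun k => v k ≠ w k)
      = (Finset.univ.filter (fun k => k ≠ i1 ∧ k ≠ i2 ∧ v k ≠ w k))
        ∪ (({i1, i2} : Finset (Fin m)).filter (fun k => v k ≠ w k)) := by
    ext k
    by_cases hk1 : k = i1 <;> by_cases hk2 : k = i2 <;>
      simp [hk1, hk2, h]
  have hdisj : Disjoint (Finset.univ.filter (fun k => k ≠ i1 ∧ k ≠ i2 ∧ v k ≠ w k))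
      (({i1, i2} : Finset (Fin m)).filter (fun k => v k ≠ w k)) := by
    rw [Finset.disjoint_left]
    intro a ha hb
    simp at ha hb
    tauto
  have hsmall : (({i1, i2} : Finset (Fin m)).filter (fun k => v k ≠ w k)).card
      = (if v i1 = w i1 then 0 else 1) + (if v i2 = w i2 then 0 else 1) := by
    rw [show ({i1, i2} : Finset (Fin m)) = insert i1 {i2} from rfl,
      Finset.filter_insert, Finset.filter_singleton]
    by_cases e1 : v i1 = w i1 <;> by_cases e2 : v i2 = w i2 <;>
      simp [e1, e2, Finset.card_insert_of_notMem, h]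
  rw [hammingDist, hsplit, Finset.card_union_of_disjoint hdisj, hsmall, Nat.add_assoc]

theorem stmt7 (q n : ℕ) (hq : 2 ≤ q) (u u' : Fin (n - 1) → Fin q)
    (i1 i2 : Fin (n - 1)) (hlt : i1 < i2)
    (hsupp : Finset.univ.filter (fun k => u k ≠ u' k) = {i1, i2}) :
    ∀ v : Fin (n - 1) → Fin q,
      (hammingDist v u ≤ 2 ∧ hammingDist v u' ≤ 2) ↔
        Xor'
          (∀ k, k ≠ i1 → k ≠ i2 → v k = u k)
          ((Finset.univ.filter fun k => k ≠ i1 ∧ k ≠ i2 ∧ v k ≠ u k).card = 1 ∧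
            ((v i1 = u i1 ∧ v i2 = u' i2) ∨ (v i1 = u' i1 ∧ v i2 = u i2))) := by
  intro v
  have hne : i1 ≠ i2 := ne_of_lt hlt
  have hmem : ∀ k : Fin (n-1), u k ≠ u' k ↔ (k = i1 ∨ k = i2) := by
    intro k
    constructor
    · intro h
      have : k ∈ Finset.univ.filter (fun k => u k ≠ u' k) := by simp [h]
      rw [hsupp] at this; simpa using this
    · intro h
      have : k ∈ ({i1, i2} : Finset (Fin (n-1))) := by simpa using h
      rw [← hsupp] at this; simpa using this
  have h1 : u i1 ≠ u' i1 := (hmem i1).2 (Or.inl rfl)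
  have h2 : u i2 ≠ u' i2 := (hmem i2).2 (Or.inr rfl)
  have hD' : (Finset.univ.filter (fun k => k ≠ i1 ∧ k ≠ i2 ∧ v k ≠ u' k))
      = (Finset.univ.filter (fun k => k ≠ i1 ∧ k ≠ i2 ∧ v k ≠ u k)) := by
    apply Finset.filter_congr
    intro k _
    by_cases hk1 : k = i1
    · simp [hk1]
    by_cases hk2 : k = i2
    · simp [hk2]
    have : u k = u' k := by
      by_contra hc
      rcases (hmem k).1 hc with h | h <;> tauto
    simp [hk1, hk2, this]
  have hi : (∀ k, k ≠ i1 → k ≠ i2 → v k = u k)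
      ↔ (Finset.univ.filter (fun k => k ≠ i1 ∧ k ≠ i2 ∧ v k ≠ u k)).card = 0 := by
    rw [Finset.card_eq_zero, Finset.filter_eq_empty_iff]
    simp only [Finset.mem_univ, forall_true_left, not_and, not_not]
  rw [dist_split v u i1 i2 hne, dist_split v u' i1 i2 hne, hD', hi]
  by_cases e1 : v i1 = u i1 <;> by_cases e2 : v i2 = u i2 <;>
    by_cases e1' : v i1 = u' i1 <;> by_cases e2' : v i2 = u' i2 <;>
    first
      | exact absurd (e1.symm.trans e1') h1
      | exact absurd (e2.symm.trans e2') h2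
      | (simp [Xor', Xor, e1, e2, e1', e2', h1, h2, Ne.symm h1, Ne.symm h2, -Finset.card_eq_zero] <;> omega)
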